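/- arXiv:1103.0674 — 2 statements merged into one kernel-verified Lean document; each statement's English description precedes it below -/
import Mathlib

section
/- Let f: [0,T] → ℝ² be a curve f(t) = (r(t), y(t)) with r, y absolutely continuous and nondecreasing, r(t) ≥ ε for t ∈ [ε,T], y(t) ≤ −ε for t ∈ [0, T−ε], and set h₀ = ε/(2M) with M ≥ 1 and 0 < ε. Define the shifted polar angle α̂(t) = π/2 + arctan((y(t)+h₀)/r(t)). If moreover r'(t) + y'(t) > 0 a.e., r(t) = t and 0 ≤ y'(t) ≤ M a.e. on [0,ε], and y(t) = t − T and 0 ≤ r'(t) ≤ M a.e. on [T−ε, T], then α̂ is strictly increasing on [0,T]. -/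
open Set Filter Topology

lemma deriv_nonneg_of_monotoneOn' {f : ℝ → ℝ} {a b t : ℝ} (hf : MonotoneOn f (Set.Icc a b))
    (ht : t ∈ Set.Ioo a b) (hd : DifferentiableAt ℝ f t) : 0 ≤ deriv f t := by
  have h := hd.hasDerivAt
  rw [hasDerivAt_iff_tendsto_slope] at h
  have h' : Tendsto (slope f t) (𝓝[>] t) (𝓝 (deriv f t)) :=
    h.mono_left (nhdsWithin_mono _ (fun x hx => ne_of_gt hx))
  refine ge_of_tendsto h' ?_
  filter_upwards [Ioo_mem_nhdsGT_of_mem ⟨le_refl t, ht.2⟩] with u hu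
  have htu : t ≤ u := hu.1.le
  have hfle : f t ≤ f u := hf ⟨ht.1.le, ht.2.le⟩ ⟨ht.1.le.trans htu, hu.2.le⟩ htu
  rw [slope_def_field]
  exact div_nonneg (sub_nonneg.2 hfle) (sub_nonneg.2 htu)

/-- Core computation of Lemma `angle`: for a nondecreasing curve `(r(t), y(t))`, `t ∈ [0,T]`,
as in the definition of the class `𝒟`, the shifted polar angle
`α̂(t) = π/2 + arctan((y(t)+h₀)/r(t))` (with `h₀ = ε/(2M)`, and with value `0` on the axis
`r = 0`) is strictly increasing on `[0,T]`. -/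
theorem stmt_14 (ε M T : ℝ) (hε : 0 < ε) (hM : 1 ≤ M) (hT : 2 * ε ≤ T)
    (r y : ℝ → ℝ)
    (hrc : ContinuousOn r (Set.Icc 0 T)) (hyc : ContinuousOn y (Set.Icc 0 T))
    (hrm : MonotoneOn r (Set.Icc 0 T)) (hym : MonotoneOn y (Set.Icc 0 T))
    (hdiff : ∀ t ∈ Set.Ioo 0 T, DifferentiableAt ℝ r t ∧ DifferentiableAt ℝ y t)
    (hrε : ∀ t ∈ Set.Icc ε T, ε ≤ r t)
    (hyε : ∀ t ∈ Set.Icc 0 (T - ε), y t ≤ -ε)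
    (hpos : ∀ t ∈ Set.Ioo 0 T, 0 < deriv r t + deriv y t)
    (hr0 : ∀ t ∈ Set.Icc 0 ε, r t = t)
    (hyM : ∀ t ∈ Set.Ioo 0 ε, deriv y t ≤ M)
    (hyT : ∀ t ∈ Set.Icc (T - ε) T, y t = t - T)
    (hrM : ∀ t ∈ Set.Ioo (T - ε) T, deriv r t ≤ M) :
    StrictMonoOn (fun t =>
        if r t = 0 then 0
        else Real.pi / 2 + Real.arctan ((y t + ε / (2 * M)) / r t))
      (Set.Icc 0 T) := by
  have hM0 : (0:ℝ) < M := lt_of_lt_of_le one_pos hM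
  set h₀ : ℝ := ε / (2 * M) with hh₀
  have hh₀pos : 0 < h₀ := div_pos hε (by positivity)
  have hh₀le : h₀ ≤ ε / 2 := by
    rw [hh₀, div_le_div_iff₀ (by positivity) (by positivity)]
    nlinarith
  have hεT : ε ≤ T - ε := by linarith
  have hT0 : (0:ℝ) < T := by linarith
  -- r is positive on (0, T]
  have hrpos : ∀ t ∈ Set.Ioc 0 T, 0 < r t := by
    intro t ht
    rcases le_or_gt t ε with h | h
    · rw [hr0 t ⟨ht.1.le, h⟩]; exact ht.1
    · exact lt_of_lt_of_le hε (hrε t ⟨h.le, ht.2⟩)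
  -- the key function g
  set g : ℝ → ℝ := fun t => (y t + h₀) / r t with hg
  have hgc : ContinuousOn g (Set.Ioc 0 T) := by
    apply ContinuousOn.div
    · exact ((hyc.mono Set.Ioc_subset_Icc_self).add continuousOn_const)
    · exact hrc.mono Set.Ioc_subset_Icc_self
    · intro t ht; exact (hrpos t ht).ne'
  -- derivative positivity
  have hderiv : ∀ t ∈ Set.Ioo 0 T, 0 < deriv g t := by
    intro t ht
    have htIoc : t ∈ Set.Ioc 0 T := ⟨ht.1, ht.2.le⟩
    have hrt : 0 < r t := hrpos t htIoc
    have hdr := (hdiff t ht).1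
    have hdy := (hdiff t ht).2
    have hdg : deriv g t = (deriv y t * r t - (y t + h₀) * deriv r t) / (r t)^2 := by
      rw [hg]
      rw [show (fun t => (y t + h₀) / r t) = (fun t => y t + h₀) / r from rfl]
      rw [deriv_div (hdy.add_const h₀) hdr hrt.ne']
      simp [deriv_add_const]
    rw [hdg]
    apply div_pos _ (by positivity)
    -- three regimes
    have hynn : 0 ≤ deriv y t := deriv_nonneg_of_monotoneOn' hym ht hdy
    have hrnn : 0 ≤ deriv r t := deriv_nonneg_of_monotoneOn' hrm ht hdr
    rcases lt_or_ge t ε with h1 | h1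
    · -- t ∈ (0, ε): r t = t, deriv r t = 1, y t + h₀ ≤ -ε/2
      have hre : deriv r t = 1 := by
        have : r =ᶠ[nhds t] id := by
          filter_upwards [Ioo_mem_nhds ht.1 h1] with x hx
          exact hr0 x ⟨hx.1.le, hx.2.le⟩
        rw [this.deriv_eq, deriv_id]
      have hyt : y t ≤ -ε := hyε t ⟨ht.1.le, h1.le.trans hεT⟩
      have hrt' : r t = t := hr0 t ⟨ht.1.le, h1.le⟩
      nlinarith [mul_nonneg hynn ht.1.le]
    rcases le_or_gt t (T - ε) with h2 | h2
    · -- middle regime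
      have hrt' : ε ≤ r t := hrε t ⟨h1, ht.2.le⟩
      have hyt : y t ≤ -ε := hyε t ⟨ht.1.le, h2⟩
      have hp := hpos t ht
      nlinarith [mul_nonneg hynn (le_of_lt (lt_of_lt_of_le hε hrt'))]
    · -- t ∈ (T-ε, T): y t = t - T, deriv y t = 1
      have hye : deriv y t = 1 := by
        have : y =ᶠ[nhds t] (fun s => s - T) := by
          filter_upwards [Ioo_mem_nhds h2 ht.2] with x hx
          exact hyT x ⟨hx.1.le, hx.2.le⟩
        rw [this.deriv_eq]
        simp
      have hyt : y t = t - T := hyT t ⟨h2.le, ht.2.le⟩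
      have hrt' : ε ≤ r t := hrε t ⟨hεT.trans h2.le, ht.2.le⟩
      have hrM' : deriv r t ≤ M := hrM t ⟨h2, ht.2⟩
      have hyth : y t + h₀ ≤ h₀ := by rw [hyt]; linarith [ht.2]
      rw [hye]
      rcases le_or_gt (y t + h₀) 0 with h3 | h3
      · nlinarith [mul_nonneg (neg_nonneg.2 h3) hrnn]
      · have : (y t + h₀) * deriv r t ≤ h₀ * M :=
          mul_le_mul hyth hrM' hrnn hh₀pos.le
        have hh₀M : h₀ * M = ε / 2 := by
          rw [hh₀]; field_simp
        nlinarith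
  have hgmono : StrictMonoOn g (Set.Ioc 0 T) := by
    apply strictMonoOn_of_deriv_pos (convex_Ioc 0 T) hgc
    rw [interior_Ioc]
    exact hderiv
  -- assemble
  intro s hs t ht hst
  have hrs0 : r 0 = 0 := hr0 0 ⟨le_refl 0, hε.le⟩
  simp only
  rcases eq_or_lt_of_le hs.1 with h0s | h0s
  · -- s = 0
    rw [← h0s]
    have htI : t ∈ Set.Ioc 0 T := ⟨h0s ▸ hst, ht.2⟩
    rw [if_pos hrs0, if_neg (hrpos t htI).ne']
    have := Real.neg_pi_div_two_lt_arctan ((y t + h₀) / r t)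
    linarith
  · have hsI : s ∈ Set.Ioc 0 T := ⟨h0s, hs.2⟩
    have htI : t ∈ Set.Ioc 0 T := ⟨h0s.trans hst, ht.2⟩
    rw [if_neg (hrpos s hsI).ne', if_neg (hrpos t htI).ne']
    have := hgmono hsI htI hst
    have := Real.arctan_strictMono this
    linarith
end

section
/- Let a > 0 and let ψ_s: D_s → ℝ be a family of functions, s in a neighborhood of q ∈ [0,1], such that each ∂ψ_s/∂y is Lipschitz on D_s ∩ R with Lipschitz constant a (R a fixed rectangle on which r ≥ r₁/2 > 0), each set D_s ∩ D_q ∩ R satisfies |B(p,δ) ∩ D_s ∩ D_q ∩ R| ≥ cδ² for all p ∈ D_s ∩ D_q ∩ R and δ ∈ (0,1) with a constant c > 0, and ∫_{D_s ∩ D_q} r|∂ψ_s/∂y − ∂ψ_q/∂y|² → 0 as s → q. Then sup over D_s ∩ D_q ∩ R of |∂ψ_s/∂y − ∂ψ_q/∂y| → 0 as s → q. -/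
open MeasureTheory Filter

/-- Lemma `lem:limit`: uniform Lipschitz bounds for `∂ψ_s/∂y` on `D_s ∩ R`, a measure density
(corkscrew) condition for the sets `D_s ∩ D_q ∩ R`, and `L²` convergence of
`∂ψ_s/∂y → ∂ψ_q/∂y` (with weight `r`) together imply uniform convergence on
`D_s ∩ D_q ∩ R`. -/
theorem stmt_16 (a c r₁ q : ℝ) (ha : 0 < a) (hc : 0 < c) (hr₁ : 0 < r₁)
    (hq : q ∈ Set.Icc (0 : ℝ) 1)
    (D : ℝ → Set (ℝ × ℝ)) (R : Set (ℝ × ℝ))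
    (hDm : ∀ s, MeasurableSet (D s)) (hRm : MeasurableSet R)
    (hR : ∀ p ∈ R, r₁ / 2 ≤ p.1)
    (ψ : ℝ → (ℝ × ℝ) → ℝ)
    (hLip : ∀ᶠ s in nhds q, LipschitzOnWith (Real.toNNReal a)
      (fun p => fderiv ℝ (ψ s) p (0, 1)) (D s ∩ R))
    (hD : ∀ᶠ s in nhds q, D s ⊆ {p : ℝ × ℝ | 0 ≤ p.1})
    (hdens : ∀ᶠ s in nhds q, ∀ p ∈ D s ∩ D q ∩ R, ∀ δ ∈ Set.Ioo (0 : ℝ) 1,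
      c * δ ^ 2 ≤ (volume (Metric.ball p δ ∩ (D s ∩ D q ∩ R))).toReal)
    (hint : ∀ᶠ s in nhds q, IntegrableOn
      (fun p => p.1 * |fderiv ℝ (ψ s) p (0, 1) - fderiv ℝ (ψ q) p (0, 1)| ^ 2)
      (D s ∩ D q))
    (hL2 : Tendsto (fun s => ∫ p in D s ∩ D q,
        p.1 * |fderiv ℝ (ψ s) p (0, 1) - fderiv ℝ (ψ q) p (0, 1)| ^ 2)
      (nhds q) (nhds 0)) :
    ∀ η > 0, ∀ᶠ s in nhds q, ∀ p ∈ D s ∩ D q ∩ R,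
      |fderiv ℝ (ψ s) p (0, 1) - fderiv ℝ (ψ q) p (0, 1)| ≤ η := by
  intro η hη
  set δ : ℝ := min (1/2) (η / (4 * a)) with hδdef
  have hδ0 : 0 < δ := lt_min (by norm_num) (div_pos hη (by linarith))
  have hδ1 : δ < 1 := lt_of_le_of_lt (min_le_left _ _) (by norm_num)
  have h2aδ : 2 * a * δ ≤ η / 2 := by
    have h1 : δ ≤ η / (4 * a) := min_le_right _ _
    have : 2 * a * δ ≤ 2 * a * (η / (4 * a)) := by
      apply mul_le_mul_of_nonneg_left h1; linarith
    calc 2 * a * δ ≤ 2 * a * (η / (4 * a)) := this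
      _ = η / 2 := by field_simp; ring
  set ε : ℝ := r₁ / 2 * (η / 2) ^ 2 * (c * δ ^ 2) with hεdef
  have hε : 0 < ε := by positivity
  have hLipq := hLip.self_of_nhds
  have hDq := hD.self_of_nhds
  have hsmall : ∀ᶠ s in nhds q, |∫ p in D s ∩ D q,
      p.1 * |fderiv ℝ (ψ s) p (0, 1) - fderiv ℝ (ψ q) p (0, 1)| ^ 2| < ε := by
    have := Metric.tendsto_nhds.mp hL2 ε hε
    filter_upwards [this] with s hs
    simpa [Real.dist_eq] using hs
  filter_upwards [hLip, hD, hdens, hint, hsmall] with s hLs hDs hdens_s hint_s hIs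
  intro p hp
  by_contra hcon
  push_neg at hcon
  set F : (ℝ × ℝ) → ℝ :=
    fun p => fderiv ℝ (ψ s) p (0, 1) - fderiv ℝ (ψ q) p (0, 1) with hF
  set S : Set (ℝ × ℝ) := D s ∩ D q ∩ R with hS
  have key : ∀ p' ∈ Metric.ball p δ ∩ S, r₁ / 2 * (η / 2) ^ 2 ≤ p'.1 * |F p'| ^ 2 := by
    rintro p' ⟨hball, hS'⟩
    obtain ⟨⟨hp'Ds, hp'Dq⟩, hp'R⟩ := hS'
    obtain ⟨⟨hpDs, hpDq⟩, hpR⟩ := hp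
    have hd : dist p' p ≤ δ := le_of_lt (Metric.mem_ball.mp hball)
    have hls : dist (fderiv ℝ (ψ s) p' (0,1)) (fderiv ℝ (ψ s) p (0,1)) ≤ a * δ := by
      have := hLs.dist_le_mul p' ⟨hp'Ds, hp'R⟩ p ⟨hpDs, hpR⟩
      calc dist (fderiv ℝ (ψ s) p' (0,1)) (fderiv ℝ (ψ s) p (0,1))
          ≤ (a.toNNReal : ℝ) * dist p' p := this
        _ ≤ a * δ := by
            rw [Real.coe_toNNReal a ha.le]
            exact mul_le_mul_of_nonneg_left hd ha.le
    have hlq : dist (fderiv ℝ (ψ q) p' (0,1)) (fderiv ℝ (ψ q) p (0,1)) ≤ a * δ := by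
      have := hLipq.dist_le_mul p' ⟨hp'Dq, hp'R⟩ p ⟨hpDq, hpR⟩
      calc dist (fderiv ℝ (ψ q) p' (0,1)) (fderiv ℝ (ψ q) p (0,1))
          ≤ (a.toNNReal : ℝ) * dist p' p := this
        _ ≤ a * δ := by
            rw [Real.coe_toNNReal a ha.le]
            exact mul_le_mul_of_nonneg_left hd ha.le
    have hFF : |F p' - F p| ≤ 2 * a * δ := by
      have : F p' - F p = (fderiv ℝ (ψ s) p' (0,1) - fderiv ℝ (ψ s) p (0,1))
          - (fderiv ℝ (ψ q) p' (0,1) - fderiv ℝ (ψ q) p (0,1)) := by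
        simp only [hF]; ring
      rw [this]
      calc |(fderiv ℝ (ψ s) p' (0,1) - fderiv ℝ (ψ s) p (0,1))
          - (fderiv ℝ (ψ q) p' (0,1) - fderiv ℝ (ψ q) p (0,1))|
          ≤ |fderiv ℝ (ψ s) p' (0,1) - fderiv ℝ (ψ s) p (0,1)|
            + |fderiv ℝ (ψ q) p' (0,1) - fderiv ℝ (ψ q) p (0,1)| := abs_sub _ _
        _ ≤ a * δ + a * δ := by
            rw [Real.dist_eq] at hls hlq; exact add_le_add hls hlq
        _ = 2 * a * δ := by ring
    have hlow : η / 2 ≤ |F p'| := by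
      have h1 : |F p| - |F p'| ≤ |F p' - F p| := by
        rw [abs_sub_comm (F p') (F p)]; exact abs_sub_abs_le_abs_sub _ _
      have : η < |F p| := hcon
      linarith
    have hr : r₁ / 2 ≤ p'.1 := hR p' hp'R
    have hsq : (η / 2) ^ 2 ≤ |F p'| ^ 2 := by
      apply pow_le_pow_left₀ (by positivity) hlow
    exact mul_le_mul hr hsq (by positivity) (by linarith)
  -- integral estimates
  have hmeasS : MeasurableSet (Metric.ball p δ ∩ S) :=
    Metric.isOpen_ball.measurableSet.inter (((hDm s).inter (hDm q)).inter hRm)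
  have hsub : Metric.ball p δ ∩ S ⊆ D s ∩ D q := fun x hx => hx.2.1
  have hvol : c * δ ^ 2 ≤ (volume (Metric.ball p δ ∩ S)).toReal :=
    hdens_s p hp δ ⟨hδ0, hδ1⟩
  have hvolfin : volume (Metric.ball p δ ∩ S) ≠ ⊤ :=
    ne_top_of_le_ne_top (measure_ball_lt_top).ne
      (measure_mono Set.inter_subset_left)
  have hint2 : IntegrableOn (fun p => p.1 * |F p| ^ 2) (Metric.ball p δ ∩ S) volume :=
    hint_s.mono_set hsub
  have h1 : ε ≤ ∫ p' in Metric.ball p δ ∩ S, p'.1 * |F p'| ^ 2 := by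
    calc ε = (r₁ / 2 * (η / 2) ^ 2) * (c * δ ^ 2) := rfl
      _ ≤ (r₁ / 2 * (η / 2) ^ 2) * (volume (Metric.ball p δ ∩ S)).toReal := by
          apply mul_le_mul_of_nonneg_left hvol; positivity
      _ ≤ _ := by
          have := setIntegral_ge_of_const_le_real hmeasS hvolfin key hint2
          simp only [Measure.real, smul_eq_mul] at this; linarith
  have h2 : (∫ p' in Metric.ball p δ ∩ S, p'.1 * |F p'| ^ 2)
      ≤ ∫ p' in D s ∩ D q, p'.1 * |F p'| ^ 2 := by
    apply setIntegral_mono_set hint_s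
    · filter_upwards [self_mem_ae_restrict ((hDm s).inter (hDm q))] with x hx
      have : 0 ≤ x.1 := hDs hx.1
      positivity
    · exact HasSubset.Subset.eventuallyLE hsub
  have := hIs
  rw [abs_lt] at this
  simp only [hF] at h1 h2
  linarith [h1.trans h2, this.2]
end
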